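/- If a symmetric 2-(36,15,6) design admits an automorphism of order two, then the number f of points fixed by that automorphism satisfies f ∈ {0, 4, 6, 8, 10, 12, 16}. -/

import Mathlib

/-- A symmetric 2-(36,15,6) design, given as a list of 36 blocks on the point set `Fin 36`:
every block has 15 points and every two distinct points lie in exactly 6 common blocks. -/
def IsDesign (B : Fin 36 → Finset (Fin 36)) : Prop :=
  (∀ i, (B i).card = 15) ∧
    ∀ x y : Fin 36, x ≠ y →
      (Finset.univ.filter fun i => x ∈ B i ∧ y ∈ B i).card = 6

/-- `B` admits an automorphism of order two fixing exactly `f` points. -/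
def HasOrder2AutWithFixed (B : Fin 36 → Finset (Fin 36)) (f : ℕ) : Prop :=
  ∃ φ ψ : Equiv.Perm (Fin 36),
    (∀ i, B (ψ i) = (B i).image φ) ∧
    (⇑φ ∘ ⇑φ = id) ∧ ⇑φ ≠ (id : Fin 36 → Fin 36) ∧
    (Finset.univ.filter fun x => φ x = x).card = f

open Finset

/-- degree of a point is 15 -/
lemma degree15 (B : Fin 36 → Finset (Fin 36))
    (hc : ∀ i, (B i).card = 15)
    (hp : ∀ x y : Fin 36, x ≠ y →
      (Finset.univ.filter fun i => x ∈ B i ∧ y ∈ B i).card = 6)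
    (x : Fin 36) : (univ.filter fun i => x ∈ B i).card = 15 := by
  set Ix := univ.filter fun i => x ∈ B i with hIx
  have key : ∑ i ∈ Ix, ((univ.erase x).filter (· ∈ B i)).card = 14 * Ix.card := by
    rw [Finset.sum_congr rfl (fun i hi => ?_), Finset.sum_const, smul_eq_mul, mul_comm]
    · have hxi : x ∈ B i := by
        simp only [hIx, mem_filter] at hi; exact hi.2
      have : (univ.erase x).filter (· ∈ B i) = (B i).erase x := by
        ext y; simp [Finset.mem_erase, and_comm]
      rw [this, Finset.card_erase_of_mem hxi, hc i]
  have key2 : ∑ i ∈ Ix, ((univ.erase x).filter (· ∈ B i)).card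
      = ∑ y ∈ univ.erase x, (Ix.filter fun i => y ∈ B i).card := by
    simp only [Finset.card_filter]
    exact Finset.sum_comm
  have key3 : ∀ y ∈ univ.erase x, (Ix.filter fun i => y ∈ B i).card = 6 := by
    intro y hy
    have hyx : y ≠ x := (Finset.mem_erase.1 hy).1
    rw [← hp x y (Ne.symm hyx)]
    congr 1
    rw [hIx, Finset.filter_filter]
  rw [Finset.sum_congr rfl key3, Finset.sum_const, Finset.card_erase_of_mem (mem_univ x),
    card_univ] at key2
  rw [key2] at key
  simp only [Fintype.card_fin, smul_eq_mul] at key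
  omega

lemma matrix_facts (B : Fin 36 → Finset (Fin 36)) (φ ψ : Equiv.Perm (Fin 36))
    (hp : ∀ x y : Fin 36, x ≠ y → (univ.filter fun i => x ∈ B i ∧ y ∈ B i).card = 6)
    (hd : ∀ x, (univ.filter fun i => x ∈ B i).card = 15)
    (hbc : ∀ i, (B i).card = 15)
    (hψB : ∀ i, B (ψ i) = (B i).image φ)
    (hφ2 : ∀ x, φ (φ x) = x) :
    ((univ.filter fun i => ψ i = i).card = (univ.filter fun x => φ x = x).card)
    ∧ (∀ i j, i ≠ j → (B i ∩ B j).card = 6) := by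
  classical
  set N : Matrix (Fin 36) (Fin 36) ℚ := Matrix.of fun x i => if x ∈ B i then 1 else 0 with hN
  set J : Matrix (Fin 36) (Fin 36) ℚ := Matrix.of fun _ _ => (1:ℚ) with hJ
  have hmem : ∀ (x : Fin 36) (i : Fin 36), x ∈ B (ψ i) ↔ φ x ∈ B i := by
    intro x i
    rw [hψB i, Finset.mem_image]
    constructor
    · rintro ⟨w, hw, rfl⟩; rwa [hφ2]
    · intro h; exact ⟨φ x, h, hφ2 x⟩
  -- N * Nᵀ = 9•1 + 6•J
  have hNNT : N * N.transpose = (9:ℚ) • 1 + (6:ℚ) • J := by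
    ext x y
    rw [Matrix.mul_apply]
    simp only [hN, hJ, Matrix.transpose_apply, Matrix.of_apply, ite_mul, one_mul, zero_mul,
      Matrix.add_apply, Matrix.smul_apply, Matrix.one_apply, smul_eq_mul]
    rw [Finset.sum_congr rfl (fun i _ => by
      by_cases h1 : x ∈ B i <;> by_cases h2 : y ∈ B i <;>
        simp [h1, h2] : ∀ i ∈ univ, (if x ∈ B i then if y ∈ B i then (1:ℚ) else 0 else 0)
          = if x ∈ B i ∧ y ∈ B i then (1:ℚ) else 0)]
    rw [Finset.sum_boole]
    by_cases hxy : x = y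
    · subst hxy
      have : (univ.filter fun i => x ∈ B i ∧ x ∈ B i).card = 15 := by
        rw [← hd x]; congr 1; simp
      rw [this]; norm_num
    · rw [hp x y hxy]; simp [hxy]
  have hJJ : J * J = (36:ℚ) • J := by
    ext x y; rw [Matrix.mul_apply]; simp [hJ]
  have hNJ : N * J = (15:ℚ) • J := by
    ext x y
    rw [Matrix.mul_apply]
    simp only [hN, hJ, Matrix.of_apply, mul_one, Matrix.smul_apply, smul_eq_mul]
    rw [Finset.sum_boole]
    have := hd x
    rw [show (univ.filter fun i => x ∈ B i) = univ.filter (fun i => x ∈ B i) from rfl] at this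
    rw [this]; norm_num
  have hJN : J * N = (15:ℚ) • J := by
    ext x y
    rw [Matrix.mul_apply]
    simp only [hN, hJ, Matrix.of_apply, one_mul, Matrix.smul_apply, smul_eq_mul]
    rw [Finset.sum_boole]
    have : (univ.filter fun i => i ∈ B y) = B y := by ext i; simp
    rw [this, hbc y]; norm_num
  -- inverse of 9•1 + 6•J
  have hinv : ((9:ℚ) • (1:Matrix (Fin 36) (Fin 36) ℚ) + (6:ℚ) • J)
      * ((1/9 : ℚ) • 1 - (2/675 : ℚ) • J) = 1 := by
    rw [Matrix.add_mul, Matrix.mul_sub, Matrix.mul_sub]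
    rw [Matrix.smul_mul, Matrix.smul_mul, Matrix.smul_mul, Matrix.smul_mul]
    rw [Matrix.mul_smul, Matrix.mul_smul, Matrix.mul_smul, Matrix.mul_smul]
    rw [Matrix.one_mul, Matrix.mul_one, Matrix.one_mul, hJJ]
    module
  -- N is invertible
  have hNright : N * (N.transpose * ((1/9 : ℚ) • 1 - (2/675 : ℚ) • J)) = 1 := by
    rw [← Matrix.mul_assoc, hNNT, hinv]
  have : Invertible N := invertibleOfRightInverse _ _ hNright
  -- permutation matrices
  set P : Matrix (Fin 36) (Fin 36) ℚ := Matrix.of fun x y => if y = φ x then 1 else 0 with hP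
  set Q : Matrix (Fin 36) (Fin 36) ℚ := Matrix.of fun i j => if i = ψ j then 1 else 0 with hQ
  have hPN : P * N = N * Q := by
    ext x i
    rw [Matrix.mul_apply, Matrix.mul_apply]
    have l : ∀ y ∈ univ, P x y * N y i
        = if y = φ x then (if φ x ∈ B i then (1:ℚ) else 0) else 0 := by
      intro y _
      by_cases h : y = φ x
      · subst h; simp [hP, hN]
      · simp [hP, hN, h]
    have r : ∀ j ∈ univ, N x j * Q j i
        = if j = ψ i then (if x ∈ B (ψ i) then (1:ℚ) else 0) else 0 := by
      intro j _
      by_cases h : j = ψ i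
      · subst h; simp [hQ, hN]
      · simp [hQ, hN, h]
    rw [Finset.sum_congr rfl l, Finset.sum_congr rfl r,
      Finset.sum_ite_eq' univ (φ x) _, Finset.sum_ite_eq' univ (ψ i) _]
    simp only [mem_univ, if_true]
    simp only [hmem x i]
  -- traces
  have htr : P.trace = Q.trace := by
    have hPexp : P = N * Q * ⅟N := by
      rw [← hPN, Matrix.mul_assoc, mul_invOf_self, Matrix.mul_one]
    rw [hPexp, Matrix.trace_mul_comm, ← Matrix.mul_assoc, invOf_mul_self,
      Matrix.one_mul]
  have htrP : P.trace = ((univ.filter fun x => φ x = x).card : ℚ) := by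
    rw [Matrix.trace]
    simp only [Matrix.diag_apply, hP, Matrix.of_apply]
    rw [Finset.sum_boole]
    congr 1
    apply Finset.card_nbij' id id <;> simp [eq_comm, Set.RightInvOn, Set.LeftInvOn, Set.MapsTo]
  have htrQ : Q.trace = ((univ.filter fun i => ψ i = i).card : ℚ) := by
    rw [Matrix.trace]
    simp only [Matrix.diag_apply, hQ, Matrix.of_apply]
    rw [Finset.sum_boole]
    congr 1
    apply Finset.card_nbij' id id <;> simp [eq_comm, Set.RightInvOn, Set.LeftInvOn, Set.MapsTo]
  have hfix : (univ.filter fun i => ψ i = i).card = (univ.filter fun x => φ x = x).card := by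
    have : ((univ.filter fun i => ψ i = i).card : ℚ)
        = ((univ.filter fun x => φ x = x).card : ℚ) := by
      rw [← htrQ, ← htr, htrP]
    exact_mod_cast this
  -- NᵀN
  have hinvJ : (⅟N : Matrix (Fin 36) (Fin 36) ℚ) * J = (1/15 : ℚ) • J := by
    have h1 : (⅟N : Matrix (Fin 36) (Fin 36) ℚ) * (N * J) = J := by
      rw [← Matrix.mul_assoc, invOf_mul_self, Matrix.one_mul]
    rw [hNJ, Matrix.mul_smul] at h1
    calc (⅟N : Matrix (Fin 36) (Fin 36) ℚ) * J
        = (1/15 : ℚ) • ((15:ℚ) • ((⅟N : Matrix (Fin 36) (Fin 36) ℚ) * J)) := by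
          rw [smul_smul]; norm_num
      _ = (1/15 : ℚ) • J := by rw [h1]
  have hNTN : N.transpose * N = (9:ℚ) • 1 + (6:ℚ) • J := by
    have e : N.transpose * N = ⅟N * (N * N.transpose * N) := by
      rw [Matrix.mul_assoc N N.transpose N, ← Matrix.mul_assoc (⅟N) N (N.transpose * N),
        invOf_mul_self, Matrix.one_mul]
    rw [e, hNNT, Matrix.add_mul, Matrix.smul_mul, Matrix.smul_mul, Matrix.one_mul, hJN,
      Matrix.mul_add, Matrix.mul_smul, Matrix.mul_smul, invOf_mul_self]
    rw [Matrix.mul_smul, hinvJ]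
    module
  have hint : ∀ i j : Fin 36, i ≠ j → (B i ∩ B j).card = 6 := by
    intro i j hij
    have h1 : (N.transpose * N) i j = 6 := by
      rw [hNTN]
      simp only [Matrix.add_apply, Matrix.smul_apply, Matrix.one_apply, hJ, Matrix.of_apply,
        smul_eq_mul]
      simp [hij]
    rw [Matrix.mul_apply] at h1
    have hterm : ∀ x ∈ univ, N.transpose i x * N x j
        = if x ∈ B i ∧ x ∈ B j then (1:ℚ) else 0 := by
      intro x _
      simp only [Matrix.transpose_apply, hN, Matrix.of_apply]
      by_cases h1 : x ∈ B i <;> by_cases h2 : x ∈ B j <;> simp [h1, h2]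
    rw [Finset.sum_congr rfl hterm, Finset.sum_boole] at h1
    have heq : (univ.filter fun x => x ∈ B i ∧ x ∈ B j) = B i ∩ B j := by
      ext z; simp
    rw [heq] at h1
    exact_mod_cast h1
  exact ⟨hfix, hint⟩

lemma even_card_of_involution {α : Type*} [DecidableEq α] (s : Finset α) (g : α → α)
    (hg : ∀ x ∈ s, g x ∈ s ∧ g (g x) = x ∧ g x ≠ x) : Even s.card := by
  classical
  induction s using Finset.strongInduction with
  | _ s ih =>
    rcases s.eq_empty_or_nonempty with rfl | ⟨a, ha⟩
    · simp
    · obtain ⟨hga, hgga, hne⟩ := hg a ha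
      set t := (s.erase a).erase (g a) with ht
      have hts : t ⊆ s := (Finset.erase_subset _ _).trans (Finset.erase_subset _ _)
      have hanot : a ∉ t := by simp [ht]
      have htss : t ⊂ s := Finset.ssubset_iff_of_subset hts |>.2 ⟨a, ha, hanot⟩
      have hgat : g a ∈ s.erase a := Finset.mem_erase.2 ⟨hne, hga⟩
      have hcard : s.card = t.card + 2 := by
        rw [ht, Finset.card_erase_of_mem hgat, Finset.card_erase_of_mem ha]
        have h2 : 2 ≤ s.card := Finset.one_lt_card.2 ⟨a, ha, g a, hga, Ne.symm hne⟩
        omega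
      have heven : Even t.card := by
        apply ih t htss
        intro x hx
        have hxs : x ∈ s := hts hx
        obtain ⟨hgx, hggx, hgne⟩ := hg x hxs
        have hxa : x ≠ a := by rintro rfl; exact hanot hx
        have hxga : x ≠ g a := by
          rintro rfl; simp [ht] at hx
        refine ⟨?_, hggx, hgne⟩
        rw [ht]
        refine Finset.mem_erase.2 ⟨?_, Finset.mem_erase.2 ⟨?_, hgx⟩⟩
        · intro h; apply hxa; rw [← hggx, h, hgga]
        · intro h; apply hxga; rw [← hggx, h]
      rw [hcard]
      rcases heven with ⟨k, hk⟩
      exact ⟨k + 1, by omega⟩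

lemma card_psi_eq (ψ : Equiv.Perm (Fin 36)) (hψ2 : ∀ i, ψ (ψ i) = i)
    (p q : Fin 36 → Prop) [DecidablePred p] [DecidablePred q]
    (h : ∀ i, p i ↔ q (ψ i)) : (univ.filter p).card = (univ.filter q).card := by
  apply Finset.card_bij (fun i _ => ψ i)
  · intro i hi
    simp only [mem_filter, mem_univ, true_and] at hi ⊢
    exact (h i).1 hi
  · intro i _ j _ hij
    exact ψ.injective hij
  · intro j hj
    simp only [mem_filter, mem_univ, true_and] at hj ⊢
    exact ⟨ψ j, (h (ψ j)).2 (by rwa [hψ2]), hψ2 j⟩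

lemma combo_count (B : Fin 36 → Finset (Fin 36)) (φ ψ : Equiv.Perm (Fin 36))
    (hp : ∀ x y : Fin 36, x ≠ y → (univ.filter fun i => x ∈ B i ∧ y ∈ B i).card = 6)
    (hfb : ∀ i, ψ i = i → ∀ u, u ∈ B i ↔ φ u ∈ B i)
    (hφ2 : ∀ x, φ (φ x) = x)
    (y z u v : Fin 36) (hu : u = y ∨ u = φ y) (hv : v = z ∨ v = φ z) (huv : u ≠ v) :
    (univ.filter fun i => ψ i ≠ i ∧ u ∈ B i ∧ v ∈ B i).card
      + (univ.filter fun i => ψ i = i ∧ y ∈ B i ∧ z ∈ B i).card = 6 := by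
  classical
  have htrans : ∀ i, ψ i = i → ((u ∈ B i ↔ y ∈ B i) ∧ (v ∈ B i ↔ z ∈ B i)) := by
    intro i hfix
    constructor
    · rcases hu with rfl | rfl
      · exact Iff.rfl
      · rw [← hfb i hfix y]
    · rcases hv with rfl | rfl
      · exact Iff.rfl
      · rw [← hfb i hfix z]
  have hsplit := Finset.card_filter_add_card_filter_not
    (s := univ.filter fun i => u ∈ B i ∧ v ∈ B i) (p := fun i => ψ i = i)
  have e1 : (univ.filter fun i => u ∈ B i ∧ v ∈ B i).filter (fun i => ¬ ψ i = i)
      = univ.filter fun i => ψ i ≠ i ∧ u ∈ B i ∧ v ∈ B i := by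
    ext i
    simp only [mem_filter, mem_univ, true_and, ne_eq]
    tauto
  have e2 : (univ.filter fun i => u ∈ B i ∧ v ∈ B i).filter (fun i => ψ i = i)
      = univ.filter fun i => ψ i = i ∧ y ∈ B i ∧ z ∈ B i := by
    ext i
    simp only [mem_filter, mem_univ, true_and]
    constructor
    · rintro ⟨⟨hui, hvi⟩, hfix⟩
      exact ⟨hfix, ((htrans i hfix).1).1 hui, ((htrans i hfix).2).1 hvi⟩
    · rintro ⟨hfix, hyi, hzi⟩
      exact ⟨⟨((htrans i hfix).1).2 hyi, ((htrans i hfix).2).2 hzi⟩, hfix⟩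
  rw [e1, e2, hp u v huv] at hsplit
  omega

section
variable (B : Fin 36 → Finset (Fin 36)) (φ ψ : Equiv.Perm (Fin 36))

lemma filter_ext (p q : Fin 36 → Prop) [DecidablePred p] [DecidablePred q]
    (h : ∀ i, p i ↔ q i) : (univ.filter p) = univ.filter q := by
  ext i; simp only [mem_filter, mem_univ, true_and]; exact h i

lemma double_split (p r s : Fin 36 → Prop) [DecidablePred p] [DecidablePred r]
    [DecidablePred s] :
    (univ.filter fun i => p i).card
    = (univ.filter fun i => p i ∧ r i ∧ s i).card
    + (univ.filter fun i => p i ∧ r i ∧ ¬ s i).card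
    + (univ.filter fun i => p i ∧ ¬ r i ∧ s i).card
    + (univ.filter fun i => p i ∧ ¬ r i ∧ ¬ s i).card := by
  classical
  have h1 := Finset.card_filter_add_card_filter_not
    (s := univ.filter fun i => p i) (p := fun i => r i)
  have h2 := Finset.card_filter_add_card_filter_not
    (s := univ.filter fun i => p i ∧ r i) (p := fun i => s i)
  have h3 := Finset.card_filter_add_card_filter_not
    (s := univ.filter fun i => p i ∧ ¬ r i) (p := fun i => s i)
  rw [Finset.filter_filter] at h1 h2 h3
  rw [Finset.filter_filter] at h1 h2 h3
  rw [show (univ.filter fun i => (p i ∧ r i) ∧ s i)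
      = univ.filter fun i => p i ∧ r i ∧ s i from filter_ext _ _ (by tauto)] at h2
  rw [show (univ.filter fun i => (p i ∧ r i) ∧ ¬ s i)
      = univ.filter fun i => p i ∧ r i ∧ ¬ s i from filter_ext _ _ (by tauto)] at h2
  rw [show (univ.filter fun i => (p i ∧ ¬ r i) ∧ s i)
      = univ.filter fun i => p i ∧ ¬ r i ∧ s i from filter_ext _ _ (by tauto)] at h3
  rw [show (univ.filter fun i => (p i ∧ ¬ r i) ∧ ¬ s i)
      = univ.filter fun i => p i ∧ ¬ r i ∧ ¬ s i from filter_ext _ _ (by tauto)] at h3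
  omega
end

set_option maxHeartbeats 2000000 in
lemma inter_card_two (B : Fin 36 → Finset (Fin 36)) (φ ψ : Equiv.Perm (Fin 36))
    (hp : ∀ x y : Fin 36, x ≠ y → (univ.filter fun i => x ∈ B i ∧ y ∈ B i).card = 6)
    (hfb : ∀ i, ψ i = i → ∀ u, u ∈ B i ↔ φ u ∈ B i)
    (hφ2 : ∀ x, φ (φ x) = x)
    (hψ2 : ∀ i, ψ (ψ i) = i)
    (hmem : ∀ x i, x ∈ B (ψ i) ↔ φ x ∈ B i)
    (hφinj : Function.Injective φ)
    (hNT22 : (univ.filter fun i => ψ i ≠ i).card = 22)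
    (hS4 : ∀ w : Fin 36, φ w ≠ w →
      (univ.filter fun i => ψ i ≠ i ∧ (w ∈ B i ↔ φ w ∈ B i)).card = 4)
    (y z : Fin 36) (hy : φ y ≠ y) (hz : φ z ≠ z) (hzy : z ≠ y) (hzφy : z ≠ φ y) :
    ((univ.filter fun i => ψ i ≠ i ∧ (y ∈ B i ↔ φ y ∈ B i))
      ∩ (univ.filter fun i => ψ i ≠ i ∧ (z ∈ B i ↔ φ z ∈ B i))).card = 2 := by
  classical
  have hdis : ∀ u v : Fin 36, (u = y ∨ u = φ y) → (v = z ∨ v = φ z) → u ≠ v := by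
    rintro u v (rfl | rfl) (rfl | rfl) huv
    · exact hzy huv.symm
    · exact hzφy (by rw [huv, hφ2])
    · exact hzφy huv.symm
    · exact hzy (hφinj huv).symm
  have hc11 := combo_count B φ ψ hp hfb hφ2 y z y z (Or.inl rfl) (Or.inl rfl)
    (hdis y z (Or.inl rfl) (Or.inl rfl))
  have hc12 := combo_count B φ ψ hp hfb hφ2 y z y (φ z) (Or.inl rfl) (Or.inr rfl)
    (hdis y (φ z) (Or.inl rfl) (Or.inr rfl))
  have hc21 := combo_count B φ ψ hp hfb hφ2 y z (φ y) z (Or.inr rfl) (Or.inl rfl)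
    (hdis (φ y) z (Or.inr rfl) (Or.inl rfl))
  have hc22 := combo_count B φ ψ hp hfb hφ2 y z (φ y) (φ z) (Or.inr rfl) (Or.inr rfl)
    (hdis (φ y) (φ z) (Or.inr rfl) (Or.inr rfl))
  -- decompositions of the four combo sets
  have hd11 := double_split (fun i => ψ i ≠ i ∧ y ∈ B i ∧ z ∈ B i)
    (fun i => φ y ∈ B i) (fun i => φ z ∈ B i)
  have hd12 := double_split (fun i => ψ i ≠ i ∧ y ∈ B i ∧ φ z ∈ B i)
    (fun i => φ y ∈ B i) (fun i => z ∈ B i)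
  have hd21 := double_split (fun i => ψ i ≠ i ∧ φ y ∈ B i ∧ z ∈ B i)
    (fun i => y ∈ B i) (fun i => φ z ∈ B i)
  have hd22 := double_split (fun i => ψ i ≠ i ∧ φ y ∈ B i ∧ φ z ∈ B i)
    (fun i => y ∈ B i) (fun i => z ∈ B i)
  -- canonicalize the 16 pieces
  have cTT11 : (univ.filter fun i => (ψ i ≠ i ∧ y ∈ B i ∧ z ∈ B i) ∧ φ y ∈ B i ∧ φ z ∈ B i)
      = univ.filter fun i =>
        ψ i ≠ i ∧ (y ∈ B i ∧ φ y ∈ B i) ∧ (z ∈ B i ∧ φ z ∈ B i) :=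
    filter_ext _ _ (by intro i; tauto)
  have cTT12 : (univ.filter fun i => (ψ i ≠ i ∧ y ∈ B i ∧ φ z ∈ B i) ∧ φ y ∈ B i ∧ z ∈ B i)
      = univ.filter fun i =>
        ψ i ≠ i ∧ (y ∈ B i ∧ φ y ∈ B i) ∧ (z ∈ B i ∧ φ z ∈ B i) :=
    filter_ext _ _ (by intro i; tauto)
  have cTT21 : (univ.filter fun i => (ψ i ≠ i ∧ φ y ∈ B i ∧ z ∈ B i) ∧ y ∈ B i ∧ φ z ∈ B i)
      = univ.filter fun i =>
        ψ i ≠ i ∧ (y ∈ B i ∧ φ y ∈ B i) ∧ (z ∈ B i ∧ φ z ∈ B i) :=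
    filter_ext _ _ (by intro i; tauto)
  have cTT22 : (univ.filter fun i => (ψ i ≠ i ∧ φ y ∈ B i ∧ φ z ∈ B i) ∧ y ∈ B i ∧ z ∈ B i)
      = univ.filter fun i =>
        ψ i ≠ i ∧ (y ∈ B i ∧ φ y ∈ B i) ∧ (z ∈ B i ∧ φ z ∈ B i) :=
    filter_ext _ _ (by intro i; tauto)
  -- M2 pieces (both of y-pair, single of z-pair)
  have cM2z11 : (univ.filter fun i => (ψ i ≠ i ∧ y ∈ B i ∧ z ∈ B i) ∧ φ y ∈ B i ∧ ¬ φ z ∈ B i)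
      = univ.filter fun i =>
        ψ i ≠ i ∧ (y ∈ B i ∧ φ y ∈ B i) ∧ (z ∈ B i ∧ ¬ φ z ∈ B i) :=
    filter_ext _ _ (by intro i; tauto)
  have cM2z21 : (univ.filter fun i => (ψ i ≠ i ∧ φ y ∈ B i ∧ z ∈ B i) ∧ y ∈ B i ∧ ¬ φ z ∈ B i)
      = univ.filter fun i =>
        ψ i ≠ i ∧ (y ∈ B i ∧ φ y ∈ B i) ∧ (z ∈ B i ∧ ¬ φ z ∈ B i) :=
    filter_ext _ _ (by intro i; tauto)
  have cM2φz12 : (univ.filter fun i => (ψ i ≠ i ∧ y ∈ B i ∧ φ z ∈ B i) ∧ φ y ∈ B i ∧ ¬ z ∈ B i)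
      = univ.filter fun i =>
        ψ i ≠ i ∧ (y ∈ B i ∧ φ y ∈ B i) ∧ (φ z ∈ B i ∧ ¬ z ∈ B i) :=
    filter_ext _ _ (by intro i; tauto)
  have cM2φz22 : (univ.filter fun i => (ψ i ≠ i ∧ φ y ∈ B i ∧ φ z ∈ B i) ∧ y ∈ B i ∧ ¬ z ∈ B i)
      = univ.filter fun i =>
        ψ i ≠ i ∧ (y ∈ B i ∧ φ y ∈ B i) ∧ (φ z ∈ B i ∧ ¬ z ∈ B i) :=
    filter_ext _ _ (by intro i; tauto)
  -- M1 pieces (single of y-pair, both of z-pair)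
  have cM1y11 : (univ.filter fun i => (ψ i ≠ i ∧ y ∈ B i ∧ z ∈ B i) ∧ ¬ φ y ∈ B i ∧ φ z ∈ B i)
      = univ.filter fun i =>
        ψ i ≠ i ∧ (y ∈ B i ∧ ¬ φ y ∈ B i) ∧ (z ∈ B i ∧ φ z ∈ B i) :=
    filter_ext _ _ (by intro i; tauto)
  have cM1y12 : (univ.filter fun i => (ψ i ≠ i ∧ y ∈ B i ∧ φ z ∈ B i) ∧ ¬ φ y ∈ B i ∧ z ∈ B i)
      = univ.filter fun i =>
        ψ i ≠ i ∧ (y ∈ B i ∧ ¬ φ y ∈ B i) ∧ (z ∈ B i ∧ φ z ∈ B i) :=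
    filter_ext _ _ (by intro i; tauto)
  have cM1φy21 : (univ.filter fun i => (ψ i ≠ i ∧ φ y ∈ B i ∧ z ∈ B i) ∧ ¬ y ∈ B i ∧ φ z ∈ B i)
      = univ.filter fun i =>
        ψ i ≠ i ∧ (φ y ∈ B i ∧ ¬ y ∈ B i) ∧ (z ∈ B i ∧ φ z ∈ B i) :=
    filter_ext _ _ (by intro i; tauto)
  have cM1φy22 : (univ.filter fun i => (ψ i ≠ i ∧ φ y ∈ B i ∧ φ z ∈ B i) ∧ ¬ y ∈ B i ∧ z ∈ B i)
      = univ.filter fun i =>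
        ψ i ≠ i ∧ (φ y ∈ B i ∧ ¬ y ∈ B i) ∧ (z ∈ B i ∧ φ z ∈ B i) :=
    filter_ext _ _ (by intro i; tauto)
  -- D pieces
  have cD11 : (univ.filter fun i => (ψ i ≠ i ∧ y ∈ B i ∧ z ∈ B i) ∧ ¬ φ y ∈ B i ∧ ¬ φ z ∈ B i)
      = univ.filter fun i =>
        ψ i ≠ i ∧ (y ∈ B i ∧ ¬ φ y ∈ B i) ∧ (z ∈ B i ∧ ¬ φ z ∈ B i) :=
    filter_ext _ _ (by intro i; tauto)
  have cD12 : (univ.filter fun i => (ψ i ≠ i ∧ y ∈ B i ∧ φ z ∈ B i) ∧ ¬ φ y ∈ B i ∧ ¬ z ∈ B i)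
      = univ.filter fun i =>
        ψ i ≠ i ∧ (y ∈ B i ∧ ¬ φ y ∈ B i) ∧ (φ z ∈ B i ∧ ¬ z ∈ B i) :=
    filter_ext _ _ (by intro i; tauto)
  have cD21 : (univ.filter fun i => (ψ i ≠ i ∧ φ y ∈ B i ∧ z ∈ B i) ∧ ¬ y ∈ B i ∧ ¬ φ z ∈ B i)
      = univ.filter fun i =>
        ψ i ≠ i ∧ (φ y ∈ B i ∧ ¬ y ∈ B i) ∧ (z ∈ B i ∧ ¬ φ z ∈ B i) :=
    filter_ext _ _ (by intro i; tauto)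
  have cD22 : (univ.filter fun i => (ψ i ≠ i ∧ φ y ∈ B i ∧ φ z ∈ B i) ∧ ¬ y ∈ B i ∧ ¬ z ∈ B i)
      = univ.filter fun i =>
        ψ i ≠ i ∧ (φ y ∈ B i ∧ ¬ y ∈ B i) ∧ (φ z ∈ B i ∧ ¬ z ∈ B i) :=
    filter_ext _ _ (by intro i; tauto)
  rw [cTT11, cM2z11, cM1y11, cD11] at hd11
  rw [cTT12, cM2φz12, cM1y12, cD12] at hd12
  rw [cTT21, cM2z21, cM1φy21, cD21] at hd21
  rw [cTT22, cM2φz22, cM1φy22, cD22] at hd22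
  -- ψ-pairing equalities
  have hm1 : (univ.filter fun i =>
        ψ i ≠ i ∧ (y ∈ B i ∧ ¬ φ y ∈ B i) ∧ (z ∈ B i ∧ φ z ∈ B i)).card
      = (univ.filter fun i =>
        ψ i ≠ i ∧ (φ y ∈ B i ∧ ¬ y ∈ B i) ∧ (z ∈ B i ∧ φ z ∈ B i)).card := by
    apply card_psi_eq ψ hψ2
    intro i
    simp only [hψ2, hmem, hφ2]
    constructor
    · rintro ⟨h1, h2, h3, h4⟩; exact ⟨Ne.symm h1, h2, h4, h3⟩
    · rintro ⟨h1, h2, h3, h4⟩; exact ⟨Ne.symm h1, h2, h4, h3⟩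
  have hm2 : (univ.filter fun i =>
        ψ i ≠ i ∧ (y ∈ B i ∧ φ y ∈ B i) ∧ (z ∈ B i ∧ ¬ φ z ∈ B i)).card
      = (univ.filter fun i =>
        ψ i ≠ i ∧ (y ∈ B i ∧ φ y ∈ B i) ∧ (φ z ∈ B i ∧ ¬ z ∈ B i)).card := by
    apply card_psi_eq ψ hψ2
    intro i
    simp only [hψ2, hmem, hφ2]
    constructor
    · rintro ⟨h1, ⟨h2, h3⟩, h4, h5⟩; exact ⟨Ne.symm h1, ⟨h3, h2⟩, h4, h5⟩
    · rintro ⟨h1, ⟨h2, h3⟩, h4, h5⟩; exact ⟨Ne.symm h1, ⟨h3, h2⟩, h4, h5⟩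
  have hD1 : (univ.filter fun i =>
        ψ i ≠ i ∧ (y ∈ B i ∧ ¬ φ y ∈ B i) ∧ (z ∈ B i ∧ ¬ φ z ∈ B i)).card
      = (univ.filter fun i =>
        ψ i ≠ i ∧ (φ y ∈ B i ∧ ¬ y ∈ B i) ∧ (φ z ∈ B i ∧ ¬ z ∈ B i)).card := by
    apply card_psi_eq ψ hψ2
    intro i
    simp only [hψ2, hmem, hφ2]
    constructor
    · rintro ⟨h1, h2, h3⟩; exact ⟨Ne.symm h1, h2, h3⟩
    · rintro ⟨h1, h2, h3⟩; exact ⟨Ne.symm h1, h2, h3⟩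
  have hD2 : (univ.filter fun i =>
        ψ i ≠ i ∧ (y ∈ B i ∧ ¬ φ y ∈ B i) ∧ (φ z ∈ B i ∧ ¬ z ∈ B i)).card
      = (univ.filter fun i =>
        ψ i ≠ i ∧ (φ y ∈ B i ∧ ¬ y ∈ B i) ∧ (z ∈ B i ∧ ¬ φ z ∈ B i)).card := by
    apply card_psi_eq ψ hψ2
    intro i
    simp only [hψ2, hmem, hφ2]
    constructor
    · rintro ⟨h1, h2, h3⟩; exact ⟨Ne.symm h1, h2, h3⟩
    · rintro ⟨h1, h2, h3⟩; exact ⟨Ne.symm h1, h2, h3⟩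
  -- decomposition of the double-xor set U
  have hdU := double_split (fun i => ψ i ≠ i ∧ ¬(y ∈ B i ↔ φ y ∈ B i)
      ∧ ¬(z ∈ B i ↔ φ z ∈ B i)) (fun i => y ∈ B i) (fun i => z ∈ B i)
  have cU11 : (univ.filter fun i => (ψ i ≠ i ∧ ¬(y ∈ B i ↔ φ y ∈ B i)
        ∧ ¬(z ∈ B i ↔ φ z ∈ B i)) ∧ y ∈ B i ∧ z ∈ B i)
      = univ.filter fun i =>
        ψ i ≠ i ∧ (y ∈ B i ∧ ¬ φ y ∈ B i) ∧ (z ∈ B i ∧ ¬ φ z ∈ B i) :=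
    filter_ext _ _ (by intro i; tauto)
  have cU12 : (univ.filter fun i => (ψ i ≠ i ∧ ¬(y ∈ B i ↔ φ y ∈ B i)
        ∧ ¬(z ∈ B i ↔ φ z ∈ B i)) ∧ y ∈ B i ∧ ¬ z ∈ B i)
      = univ.filter fun i =>
        ψ i ≠ i ∧ (y ∈ B i ∧ ¬ φ y ∈ B i) ∧ (φ z ∈ B i ∧ ¬ z ∈ B i) :=
    filter_ext _ _ (by intro i; tauto)
  have cU21 : (univ.filter fun i => (ψ i ≠ i ∧ ¬(y ∈ B i ↔ φ y ∈ B i)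
        ∧ ¬(z ∈ B i ↔ φ z ∈ B i)) ∧ ¬ y ∈ B i ∧ z ∈ B i)
      = univ.filter fun i =>
        ψ i ≠ i ∧ (φ y ∈ B i ∧ ¬ y ∈ B i) ∧ (z ∈ B i ∧ ¬ φ z ∈ B i) :=
    filter_ext _ _ (by intro i; tauto)
  have cU22 : (univ.filter fun i => (ψ i ≠ i ∧ ¬(y ∈ B i ↔ φ y ∈ B i)
        ∧ ¬(z ∈ B i ↔ φ z ∈ B i)) ∧ ¬ y ∈ B i ∧ ¬ z ∈ B i)
      = univ.filter fun i =>
        ψ i ≠ i ∧ (φ y ∈ B i ∧ ¬ y ∈ B i) ∧ (φ z ∈ B i ∧ ¬ z ∈ B i) :=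
    filter_ext _ _ (by intro i; tauto)
  rw [cU11, cU12, cU21, cU22] at hdU
  -- split NT by the disjunction of the two iffs
  have hsplitP := Finset.card_filter_add_card_filter_not
    (s := univ.filter fun i => ψ i ≠ i)
    (p := fun i => (y ∈ B i ↔ φ y ∈ B i) ∨ (z ∈ B i ↔ φ z ∈ B i))
  rw [Finset.filter_filter, Finset.filter_filter] at hsplitP
  have hpos : (univ.filter fun i => (ψ i ≠ i)
        ∧ ((y ∈ B i ↔ φ y ∈ B i) ∨ (z ∈ B i ↔ φ z ∈ B i)))
      = (univ.filter fun i => ψ i ≠ i ∧ (y ∈ B i ↔ φ y ∈ B i))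
        ∪ (univ.filter fun i => ψ i ≠ i ∧ (z ∈ B i ↔ φ z ∈ B i)) := by
    ext i
    simp only [mem_union, mem_filter, mem_univ, true_and]
    tauto
  have hneg : (univ.filter fun i => (ψ i ≠ i)
        ∧ ¬((y ∈ B i ↔ φ y ∈ B i) ∨ (z ∈ B i ↔ φ z ∈ B i)))
      = univ.filter fun i => ψ i ≠ i ∧ ¬(y ∈ B i ↔ φ y ∈ B i)
        ∧ ¬(z ∈ B i ↔ φ z ∈ B i) :=
    filter_ext _ _ (by intro i; tauto)
  rw [hpos, hneg, hNT22] at hsplitP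
  have hcui := Finset.card_union_add_card_inter
    (univ.filter fun i => ψ i ≠ i ∧ (y ∈ B i ↔ φ y ∈ B i))
    (univ.filter fun i => ψ i ≠ i ∧ (z ∈ B i ↔ φ z ∈ B i))
  rw [hS4 y hy, hS4 z hz] at hcui
  have hle4 : ((univ.filter fun i => ψ i ≠ i ∧ (y ∈ B i ↔ φ y ∈ B i))
      ∩ (univ.filter fun i => ψ i ≠ i ∧ (z ∈ B i ↔ φ z ∈ B i))).card ≤ 4 := by
    calc ((univ.filter fun i => ψ i ≠ i ∧ (y ∈ B i ↔ φ y ∈ B i))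
        ∩ (univ.filter fun i => ψ i ≠ i ∧ (z ∈ B i ↔ φ z ∈ B i))).card
        ≤ (univ.filter fun i => ψ i ≠ i ∧ (y ∈ B i ↔ φ y ∈ B i)).card :=
          Finset.card_le_card Finset.inter_subset_left
      _ = 4 := hS4 y hy
  omega

set_option maxHeartbeats 1000000 in
lemma no_fourteen_endgame (φ ψ : Equiv.Perm (Fin 36))
    (S : Fin 36 → Finset (Fin 36)) (NT : Finset (Fin 36))
    (hφ2 : ∀ x, φ (φ x) = x)
    (hψ2 : ∀ i, ψ (ψ i) = i)
    (hS4 : ∀ w, φ w ≠ w → (S w).card = 4)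
    (hS2 : ∀ y z, φ y ≠ y → φ z ≠ z → z ≠ y → z ≠ φ y → (S y ∩ S z).card = 2)
    (hSsym : ∀ w, S (φ w) = S w)
    (hSinv : ∀ w i, i ∈ S w → ψ i ∈ S w)
    (hSne : ∀ w i, i ∈ S w → ψ i ≠ i)
    (hSNT : ∀ w, φ w ≠ w → S w ⊆ NT)
    (hNT22 : NT.card = 22)
    (hNF : (univ.filter fun x => φ x ≠ x).card = 22) : False := by
  classical
  -- pick two inequivalent non-fixed points
  have hexy : ∃ y, φ y ≠ y := by
    by_contra h
    push_neg at h
    have : (univ.filter fun x => φ x ≠ x) = ∅ := by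
      apply Finset.filter_eq_empty_iff.2
      intro x _
      simp [h x]
    rw [this] at hNF
    simp at hNF
  obtain ⟨y1, hy1⟩ := hexy
  obtain ⟨z1, hz1mem⟩ : ((univ.filter fun w => φ w ≠ w) \ {y1, φ y1}).Nonempty := by
    apply Finset.card_pos.1
    have h1 := Finset.card_le_card_sdiff_add_card (s := univ.filter fun w => φ w ≠ w)
      (t := {y1, φ y1})
    have h2 : ({y1, φ y1} : Finset (Fin 36)).card ≤ 2 :=
      (Finset.card_insert_le _ _).trans (by simp)
    omega
  rw [Finset.mem_sdiff] at hz1mem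
  obtain ⟨hz1nf, hz1not⟩ := hz1mem
  simp only [mem_filter, mem_univ, true_and] at hz1nf
  simp only [Finset.mem_insert, Finset.mem_singleton, not_or] at hz1not
  obtain ⟨hz1y, hz1φy⟩ := hz1not
  set O := S y1 ∩ S z1 with hO
  have hO2 : O.card = 2 := hS2 y1 z1 hy1 hz1nf hz1y hz1φy
  have hOsub1 : O ⊆ S y1 := Finset.inter_subset_left
  have hOsub2 : O ⊆ S z1 := Finset.inter_subset_right
  have hOinv : ∀ i ∈ O, ψ i ∈ O := by
    intro i hi
    rw [hO, Finset.mem_inter] at hi ⊢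
    exact ⟨hSinv _ _ hi.1, hSinv _ _ hi.2⟩
  have hONT : O ⊆ NT := hOsub1.trans (hSNT y1 hy1)
  by_cases hall : ∀ w ∈ univ.filter fun x => φ x ≠ x, O ⊆ S w
  · -- Case A : every S w contains O; double count
    have hsum1 : ∑ w ∈ univ.filter (fun x => φ x ≠ x), (S w \ O).card = 44 := by
      have hconst : ∀ w ∈ univ.filter (fun x => φ x ≠ x), (S w \ O).card = 2 := by
        intro w hw
        simp only [mem_filter, mem_univ, true_and] at hw
        rw [Finset.card_sdiff_of_subset (hall w (by simp [hw])), hS4 w hw, hO2]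
      rw [Finset.sum_congr rfl hconst, Finset.sum_const, hNF]
      simp
    have hswap : ∑ w ∈ univ.filter (fun x => φ x ≠ x), (S w \ O).card
        = ∑ i ∈ univ, ((univ.filter fun x => φ x ≠ x).filter
            fun w => i ∈ S w \ O).card := by
      have h1 : ∀ w : Fin 36, (S w \ O).card
          = ∑ i ∈ univ, if i ∈ S w \ O then 1 else 0 := by
        intro w
        rw [Finset.sum_ite_mem, Finset.univ_inter, Finset.sum_const, smul_eq_mul, mul_one]
      have h2 : ∀ i : Fin 36, ((univ.filter fun x => φ x ≠ x).filter
          fun w => i ∈ S w \ O).card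
          = ∑ w ∈ univ.filter (fun x => φ x ≠ x), if i ∈ S w \ O then 1 else 0 := by
        intro i
        rw [Finset.card_filter]
      calc ∑ w ∈ univ.filter (fun x => φ x ≠ x), (S w \ O).card
          = ∑ w ∈ univ.filter (fun x => φ x ≠ x),
            ∑ i ∈ univ, if i ∈ S w \ O then 1 else 0 :=
            Finset.sum_congr rfl (fun w _ => h1 w)
        _ = ∑ i ∈ univ, ∑ w ∈ univ.filter (fun x => φ x ≠ x),
            if i ∈ S w \ O then 1 else 0 := Finset.sum_comm
        _ = ∑ i ∈ univ, ((univ.filter fun x => φ x ≠ x).filter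
            fun w => i ∈ S w \ O).card :=
            Finset.sum_congr rfl (fun i _ => (h2 i).symm)
    have hbound : ∀ i : Fin 36, ((univ.filter fun x => φ x ≠ x).filter
        fun w => i ∈ S w \ O).card ≤ if i ∈ NT \ O then 2 else 0 := by
      intro i
      by_cases hiNT : i ∈ NT \ O
      · simp only [hiNT, if_true]
        rcases Finset.eq_empty_or_nonempty ((univ.filter fun x => φ x ≠ x).filter
          fun w => i ∈ S w \ O) with he | ⟨w0, hw0⟩
        · rw [he]; simp
        · have hw0' := hw0
          simp only [mem_filter, mem_univ, true_and] at hw0'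
          obtain ⟨hw0nf, hw0i⟩ := hw0'
          have hsub : ((univ.filter fun x => φ x ≠ x).filter fun w => i ∈ S w \ O)
              ⊆ {w0, φ w0} := by
            intro w hw
            simp only [mem_filter, mem_univ, true_and] at hw
            obtain ⟨hwnf, hwi⟩ := hw
            simp only [Finset.mem_insert, Finset.mem_singleton]
            by_contra hcon
            push_neg at hcon
            obtain ⟨hne1, hne2⟩ := hcon
            have hcard2 : (S w0 ∩ S w).card = 2 := hS2 w0 w hw0nf hwnf hne1 hne2
            have hOsubi : O ⊆ S w0 ∩ S w := by
              intro k hk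
              exact Finset.mem_inter.2 ⟨hall w0 (by simp [hw0nf]) hk,
                hall w (by simp [hwnf]) hk⟩
            have hOeq : O = S w0 ∩ S w :=
              Finset.eq_of_subset_of_card_le hOsubi (by rw [hcard2, hO2])
            have : i ∈ O := by
              rw [hOeq]
              exact Finset.mem_inter.2 ⟨(Finset.mem_sdiff.1 hw0i).1,
                (Finset.mem_sdiff.1 hwi).1⟩
            exact (Finset.mem_sdiff.1 hw0i).2 this
          exact (Finset.card_le_card hsub).trans
            ((Finset.card_insert_le _ _).trans (by simp))
      · simp only [hiNT, if_false, Nat.le_zero, Finset.card_eq_zero]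
        apply Finset.filter_eq_empty_iff.2
        intro w hw
        simp only [mem_filter, mem_univ, true_and] at hw
        intro hcon
        apply hiNT
        rw [Finset.mem_sdiff] at hcon ⊢
        exact ⟨hSNT w hw hcon.1, hcon.2⟩
    have htot : ∑ i ∈ univ, ((univ.filter fun x => φ x ≠ x).filter
        fun w => i ∈ S w \ O).card ≤ 40 := by
      calc ∑ i ∈ univ, ((univ.filter fun x => φ x ≠ x).filter
          fun w => i ∈ S w \ O).card
          ≤ ∑ i ∈ univ, if i ∈ NT \ O then 2 else 0 :=
            Finset.sum_le_sum (fun i _ => hbound i)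
        _ = (NT \ O).card * 2 := by
            rw [Finset.sum_ite_mem, Finset.univ_inter, Finset.sum_const, smul_eq_mul]
        _ = 40 := by rw [Finset.card_sdiff_of_subset hONT, hNT22, hO2]
    rw [hswap] at hsum1
    omega
  · push_neg at hall
    obtain ⟨w0, hw0mem, hw0nsub⟩ := hall
    simp only [mem_filter, mem_univ, true_and] at hw0mem
    have hOpair : ∀ v : Fin 36, ¬ (O ⊆ S v) → ∀ k ∈ O, k ∉ S v := by
      intro v hv k hk hkS
      apply hv
      have hψkO : ψ k ∈ O := hOinv k hk
      have hkne : ψ k ≠ k := hSne y1 k (hOsub1 hk)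
      have hpair : ({k, ψ k} : Finset (Fin 36)) ⊆ O := by
        intro t ht
        simp only [Finset.mem_insert, Finset.mem_singleton] at ht
        rcases ht with rfl | rfl
        · exact hk
        · exact hψkO
      have hpaircard : ({k, ψ k} : Finset (Fin 36)).card = 2 := by
        rw [Finset.card_insert_of_notMem
          (by simp only [Finset.mem_singleton]; exact Ne.symm hkne), Finset.card_singleton]
      have hOeqpair : ({k, ψ k} : Finset (Fin 36)) = O :=
        Finset.eq_of_subset_of_card_le hpair (by rw [hO2, hpaircard])
      intro t ht
      rw [← hOeqpair] at ht
      simp only [Finset.mem_insert, Finset.mem_singleton] at ht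
      rcases ht with rfl | rfl
      · exact hkS
      · exact hSinv v k hkS
    have hX1card : (S y1 \ O).card = 2 := by
      rw [Finset.card_sdiff_of_subset hOsub1, hS4 y1 hy1, hO2]
    have hX2card : (S z1 \ O).card = 2 := by
      rw [Finset.card_sdiff_of_subset hOsub2, hS4 z1 hz1nf, hO2]
    have hXeq : ∀ v : Fin 36, φ v ≠ v → v ≠ y1 → v ≠ φ y1 → v ≠ z1 → v ≠ φ z1 →
        ¬ (O ⊆ S v) → S v = (S y1 \ O) ∪ (S z1 \ O) := by
      intro v hv hvy hvφy hvz hvφz hnsub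
      have h2y : (S y1 ∩ S v).card = 2 := hS2 y1 v hy1 hv hvy hvφy
      have h2z : (S z1 ∩ S v).card = 2 := hS2 z1 v hz1nf hv hvz hvφz
      have hsuby : S y1 ∩ S v ⊆ S y1 \ O := by
        intro k hk
        rw [Finset.mem_inter] at hk
        rw [Finset.mem_sdiff]
        exact ⟨hk.1, fun hkO => hOpair v hnsub k hkO hk.2⟩
      have heqy : S y1 ∩ S v = S y1 \ O :=
        Finset.eq_of_subset_of_card_le hsuby (by rw [h2y, hX1card])
      have hsubz : S z1 ∩ S v ⊆ S z1 \ O := by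
        intro k hk
        rw [Finset.mem_inter] at hk
        rw [Finset.mem_sdiff]
        exact ⟨hk.1, fun hkO => hOpair v hnsub k hkO hk.2⟩
      have heqz : S z1 ∩ S v = S z1 \ O :=
        Finset.eq_of_subset_of_card_le hsubz (by rw [h2z, hX2card])
      have hsubXv : (S y1 \ O) ∪ (S z1 \ O) ⊆ S v := by
        intro k hk
        rcases Finset.mem_union.1 hk with hk | hk
        · rw [← heqy] at hk; exact (Finset.mem_inter.1 hk).2
        · rw [← heqz] at hk; exact (Finset.mem_inter.1 hk).2
      have hdisjX : Disjoint (S y1 \ O) (S z1 \ O) := by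
        rw [Finset.disjoint_left]
        intro k hk1 hk2
        have hkO : k ∈ O := by
          rw [hO, Finset.mem_inter]
          exact ⟨(Finset.mem_sdiff.1 hk1).1, (Finset.mem_sdiff.1 hk2).1⟩
        exact (Finset.mem_sdiff.1 hk1).2 hkO
      have hcardU : ((S y1 \ O) ∪ (S z1 \ O)).card = 4 := by
        rw [Finset.card_union_of_disjoint hdisjX, hX1card, hX2card]
      exact (Finset.eq_of_subset_of_card_le hsubXv (by rw [hS4 v hv, hcardU])).symm
    have hw0y : w0 ≠ y1 := by rintro rfl; exact hw0nsub hOsub1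
    have hw0φy : w0 ≠ φ y1 := by
      rintro rfl; rw [hSsym y1] at hw0nsub; exact hw0nsub hOsub1
    have hw0z : w0 ≠ z1 := by rintro rfl; exact hw0nsub hOsub2
    have hw0φz : w0 ≠ φ z1 := by
      rintro rfl; rw [hSsym z1] at hw0nsub; exact hw0nsub hOsub2
    have hSw0 : S w0 = (S y1 \ O) ∪ (S z1 \ O) :=
      hXeq w0 hw0mem hw0y hw0φy hw0z hw0φz hw0nsub
    have hinsle : ∀ (a : Fin 36) (s : Finset (Fin 36)) (n : ℕ), s.card ≤ n →
        (insert a s).card ≤ n + 1 :=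
      fun a s n h => (Finset.card_insert_le a s).trans (Nat.add_le_add_right h 1)
    obtain ⟨u, humem⟩ :
        ((univ.filter fun x => φ x ≠ x) \ {y1, φ y1, z1, φ z1, w0, φ w0}).Nonempty := by
      apply Finset.card_pos.1
      have h1 := Finset.card_le_card_sdiff_add_card (s := univ.filter fun x => φ x ≠ x)
        (t := {y1, φ y1, z1, φ z1, w0, φ w0})
      have h2 : ({y1, φ y1, z1, φ z1, w0, φ w0} : Finset (Fin 36)).card ≤ 6 := by
        apply hinsle; apply hinsle; apply hinsle; apply hinsle; apply hinsle
        simp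
      omega
    rw [Finset.mem_sdiff] at humem
    obtain ⟨hunf', hunot⟩ := humem
    simp only [mem_filter, mem_univ, true_and] at hunf'
    simp only [Finset.mem_insert, Finset.mem_singleton, not_or] at hunot
    obtain ⟨huy, huφy, huz, huφz, huw0, huφw0⟩ := hunot
    have hw0u : w0 ≠ u := fun h => huw0 h.symm
    have hw0φu : w0 ≠ φ u := by
      intro h
      apply huφw0
      rw [h, hφ2]
    have h2uw : (S u ∩ S w0).card = 2 := hS2 u w0 hunf' hw0mem hw0u hw0φu
    by_cases hOu : O ⊆ S u
    · have h2y' : (S y1 ∩ S u).card = 2 := hS2 y1 u hy1 hunf' huy huφy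
      have h2z' : (S z1 ∩ S u).card = 2 := hS2 z1 u hz1nf hunf' huz huφz
      have hOeqy : O = S y1 ∩ S u :=
        Finset.eq_of_subset_of_card_le
          (fun k hk => Finset.mem_inter.2 ⟨hOsub1 hk, hOu hk⟩) (by rw [h2y', hO2])
      have hOeqz : O = S z1 ∩ S u :=
        Finset.eq_of_subset_of_card_le
          (fun k hk => Finset.mem_inter.2 ⟨hOsub2 hk, hOu hk⟩) (by rw [h2z', hO2])
      have hzero : (S u ∩ S w0).card = 0 := by
        rw [Finset.card_eq_zero, Finset.eq_empty_iff_forall_notMem]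
        intro k hk
        rw [Finset.mem_inter] at hk
        obtain ⟨hku, hkw⟩ := hk
        rw [hSw0] at hkw
        rcases Finset.mem_union.1 hkw with hkx | hkx
        · have hkO : k ∈ O := by
            rw [hOeqy]
            exact Finset.mem_inter.2 ⟨(Finset.mem_sdiff.1 hkx).1, hku⟩
          exact (Finset.mem_sdiff.1 hkx).2 hkO
        · have hkO : k ∈ O := by
            rw [hOeqz]
            exact Finset.mem_inter.2 ⟨(Finset.mem_sdiff.1 hkx).1, hku⟩
          exact (Finset.mem_sdiff.1 hkx).2 hkO
      omega
    · have hSu : S u = (S y1 \ O) ∪ (S z1 \ O) :=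
        hXeq u hunf' huy huφy huz huφz hOu
      rw [hSu, ← hSw0, Finset.inter_self] at h2uw
      have h4 := hS4 w0 hw0mem
      omega

lemma main_core (B : Fin 36 → Finset (Fin 36)) (f : ℕ) (φ ψ : Equiv.Perm (Fin 36))
    (hbc : ∀ i, (B i).card = 15)
    (hp : ∀ x y : Fin 36, x ≠ y → (univ.filter fun i => x ∈ B i ∧ y ∈ B i).card = 6)
    (hψB : ∀ i, B (ψ i) = (B i).image φ)
    (hφ2 : ∀ x, φ (φ x) = x)
    (hφne : ⇑φ ≠ (id : Fin 36 → Fin 36))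
    (hf : (univ.filter fun x => φ x = x).card = f) :
    f ∈ ({0, 4, 6, 8, 10, 12, 16} : Finset ℕ) := by
  classical
  have hd : ∀ x, (univ.filter fun i => x ∈ B i).card = 15 := degree15 B hbc hp
  obtain ⟨hfixeq, hint⟩ := matrix_facts B φ ψ hp hd hbc hψB hφ2
  have hφinj : Function.Injective φ := φ.injective
  have hBinj : Function.Injective B := by
    intro i j hij
    by_contra hne
    have h6 := hint i j hne
    rw [hij, Finset.inter_self, hbc] at h6
    omega
  have hψ2 : ∀ i, ψ (ψ i) = i := by
    intro i
    apply hBinj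
    rw [hψB, hψB, Finset.image_image]
    have : (⇑φ ∘ ⇑φ) = id := funext hφ2
    rw [this, Finset.image_id]
  have hmem : ∀ (x i : Fin 36), x ∈ B (ψ i) ↔ φ x ∈ B i := by
    intro x i
    rw [hψB i, Finset.mem_image]
    constructor
    · rintro ⟨w, hw, rfl⟩; rwa [hφ2]
    · intro h; exact ⟨φ x, h, hφ2 x⟩
  have hfb : ∀ i, ψ i = i → ∀ u, u ∈ B i ↔ φ u ∈ B i := by
    intro i hi u
    constructor
    · intro hu
      rw [show B i = (B i).image φ from by rw [← hψB, hi]]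
      exact Finset.mem_image_of_mem φ hu
    · intro hu
      rw [show B i = (B i).image φ from by rw [← hψB, hi]] at hu
      obtain ⟨w, hw, hwu⟩ := Finset.mem_image.1 hu
      rwa [← hφinj hwu]
  -- fixed index count
  have hfixcard : (univ.filter fun i => ψ i = i).card = f := by rw [hfixeq, hf]
  have hNT : (univ.filter fun i => ψ i ≠ i).card = 36 - f := by
    have := Finset.card_filter_add_card_filter_not (s := (univ : Finset (Fin 36)))
      (p := fun i => ψ i = i)
    simp only [card_univ, Fintype.card_fin] at this
    simp only [ne_eq]
    omega
  have hfle36 : f ≤ 36 := by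
    rw [← hf]
    exact (Finset.card_filter_le _ _).trans (by simp)
  -- f is even
  have hNFcard : (univ.filter fun x => φ x ≠ x).card = 36 - f := by
    have := Finset.card_filter_add_card_filter_not (s := (univ : Finset (Fin 36)))
      (p := fun x => φ x = x)
    simp only [card_univ, Fintype.card_fin] at this
    simp only [ne_eq]
    omega
  have hfeven : Even f := by
    have he : Even ((univ.filter fun x => φ x ≠ x).card) := by
      apply even_card_of_involution _ φ
      intro x hx
      simp only [mem_filter, mem_univ, true_and] at hx ⊢
      refine ⟨?_, hφ2 x, ?_⟩
      · intro h; exact hx (by rw [← hφ2 x, h, h])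
      · intro h; exact hx (hφinj (by rw [hφ2, h]))
    rw [hNFcard] at he
    rcases he with ⟨k, hk⟩
    rcases Nat.even_or_odd f with h | h
    · exact h
    · exfalso; rcases h with ⟨m, hm⟩; omega
  -- existence of a nonfixed point
  have hexy : ∃ y, φ y ≠ y := by
    by_contra h
    push_neg at h
    exact hφne (funext h)
  -- cards of the "exactly one" sets
  have hAcard : ∀ y : Fin 36, φ y ≠ y →
      (univ.filter fun i => y ∈ B i ∧ φ y ∉ B i).card = 9 := by
    intro y hy
    have hsplit := Finset.card_filter_add_card_filter_not
      (s := univ.filter fun i => y ∈ B i) (p := fun i => φ y ∈ B i)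
    rw [Finset.filter_filter, Finset.filter_filter, hd y] at hsplit
    have h6 : (univ.filter fun i => y ∈ B i ∧ φ y ∈ B i).card = 6 := hp y (φ y) (Ne.symm hy)
    rw [h6] at hsplit
    have e : (univ.filter fun a => y ∈ B a ∧ ¬ φ y ∈ B a)
        = univ.filter fun i => y ∈ B i ∧ φ y ∉ B i := rfl
    rw [e] at hsplit
    omega
  have hA2 : ∀ y : Fin 36, (univ.filter fun i => φ y ∈ B i ∧ φ (φ y) ∉ B i)
      = univ.filter fun i => φ y ∈ B i ∧ y ∉ B i := by
    intro y; ext i; simp [hφ2]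
  have hUA : ∀ y : Fin 36, φ y ≠ y →
      ((univ.filter fun i => y ∈ B i ∧ φ y ∉ B i) ∪
        (univ.filter fun i => φ y ∈ B i ∧ y ∉ B i)).card = 18 := by
    intro y hy
    rw [Finset.card_union_of_disjoint]
    · rw [hAcard y hy, ← hA2 y, hAcard (φ y) (by rw [hφ2]; exact Ne.symm hy)]
    · rw [Finset.disjoint_left]
      intro i hi1 hi2
      simp only [mem_filter, mem_univ, true_and] at hi1 hi2
      exact hi1.2 hi2.1
  have hUAsub : ∀ y : Fin 36, φ y ≠ y →
      ((univ.filter fun i => y ∈ B i ∧ φ y ∉ B i) ∪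
        (univ.filter fun i => φ y ∈ B i ∧ y ∉ B i)) ⊆ univ.filter fun i => ψ i ≠ i := by
    intro y hy i hi
    simp only [mem_union, mem_filter, mem_univ, true_and, ne_eq] at hi ⊢
    intro hfix
    rcases hi with ⟨h1, h2⟩ | ⟨h1, h2⟩
    · exact h2 ((hfb i hfix y).1 h1)
    · exact h2 ((hfb i hfix y).2 h1)
  have hfle18 : f ≤ 18 := by
    obtain ⟨y, hy⟩ := hexy
    have h1 := Finset.card_le_card (hUAsub y hy)
    rw [hUA y hy, hNT] at h1
    have hcard := Finset.card_le_univ (univ.filter fun i => ψ i ≠ i)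
    simp only [card_univ, Fintype.card_fin] at hcard
    omega
  -- f ≠ 2
  have hne2 : f ≠ 2 := by
    intro hf2
    obtain ⟨x, y, hxy, hFP⟩ := Finset.card_eq_two.1 (by rw [hf, hf2] :
      (univ.filter fun x => φ x = x).card = 2)
    have hxfix : φ x = x := by
      have : x ∈ univ.filter fun w => φ w = w := by rw [hFP]; simp
      simpa using this
    have hyfix : φ y = y := by
      have : y ∈ univ.filter fun w => φ w = w := by rw [hFP]; simp
      simpa using this
    have hkey : ∀ i, ψ i ≠ i → x ∈ B i → y ∈ B i := by
      intro i hnfix hxi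
      have h6 : (B i ∩ B (ψ i)).card = 6 := hint i (ψ i) (Ne.symm hnfix)
      set K := B i ∩ B (ψ i) with hK
      have hφK : ∀ z ∈ K, φ z ∈ K := by
        intro z hz
        rw [hK, Finset.mem_inter] at hz ⊢
        exact ⟨(hmem z i).1 hz.2, (hmem (φ z) i).2 (by rw [hφ2]; exact hz.1)⟩
      have heve : Even ((K.filter fun z => ¬ φ z = z).card) := by
        apply even_card_of_involution _ φ
        intro z hz
        simp only [mem_filter] at hz ⊢
        refine ⟨⟨hφK z hz.1, ?_⟩, hφ2 z, ?_⟩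
        · intro h; exact hz.2 (by rw [← hφ2 z, h, h])
        · intro h; exact hz.2 (hφinj (by rw [hφ2, h]))
      have hsplitK := Finset.card_filter_add_card_filter_not
        (s := K) (p := fun z => φ z = z)
      rw [h6] at hsplitK
      have hxK : x ∈ K.filter fun z => φ z = z := by
        simp only [hK, mem_filter, Finset.mem_inter]
        exact ⟨⟨hxi, (hmem x i).2 (by rw [hxfix]; exact hxi)⟩, hxfix⟩
      have hsubK : (K.filter fun z => φ z = z) ⊆ {x, y} := by
        intro z hz
        simp only [mem_filter] at hz
        have : z ∈ univ.filter fun w => φ w = w := by simp [hz.2]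
        rw [hFP] at this
        exact this
      have hcard2 : (K.filter fun z => φ z = z).card = 2 := by
        have h1 : 1 ≤ (K.filter fun z => φ z = z).card :=
          Finset.card_pos.2 ⟨x, hxK⟩
        have h2 : (K.filter fun z => φ z = z).card ≤ 2 :=
          (Finset.card_le_card hsubK).trans (Finset.card_insert_le _ _ |>.trans (by simp))
        rcases heve with ⟨m, hm⟩
        omega
      have heqK : (K.filter fun z => φ z = z) = {x, y} := by
        apply Finset.eq_of_subset_of_card_le hsubK
        rw [hcard2]
        exact Finset.card_le_card (by intro z hz; exact hz) |>.trans (le_refl _) |>.trans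
          (by rw [Finset.card_insert_of_notMem (by simp [hxy]), Finset.card_singleton])
      have hyK : y ∈ K := by
        have : y ∈ K.filter fun z => φ z = z := by rw [heqK]; simp
        exact (Finset.mem_filter.1 this).1
      rw [hK, Finset.mem_inter] at hyK
      exact hyK.1
    have hfx2 : (univ.filter fun i => ψ i = i).card = 2 := by rw [hfixcard, hf2]
    have hsplitx := Finset.card_filter_add_card_filter_not
      (s := univ.filter fun i => x ∈ B i) (p := fun i => ψ i = i)
    rw [hd x] at hsplitx
    have hb1 : ((univ.filter fun i => x ∈ B i).filter fun i => ψ i = i).card ≤ 2 := by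
      rw [← hfx2]
      apply Finset.card_le_card
      intro i hi
      simp only [mem_filter, mem_univ, true_and] at hi ⊢
      exact hi.2
    have hsub2 : ((univ.filter fun i => x ∈ B i).filter fun i => ¬ ψ i = i)
        ⊆ univ.filter fun i => x ∈ B i ∧ y ∈ B i := by
      intro i hi
      simp only [mem_filter, mem_univ, true_and] at hi ⊢
      exact ⟨hi.1, hkey i hi.2 hi.1⟩
    have hle := Finset.card_le_card hsub2
    rw [hp x y hxy] at hle
    omega
  -- f ≠ 18
  have hne18 : f ≠ 18 := by
    intro hf18
    obtain ⟨y, hy⟩ := hexy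
    have hNT18 : (univ.filter fun i => ψ i ≠ i).card = 18 := by rw [hNT, hf18]
    have hUNT : ∀ w : Fin 36, φ w ≠ w → ∀ i, ψ i ≠ i →
        ((w ∈ B i ∧ φ w ∉ B i) ∨ (φ w ∈ B i ∧ w ∉ B i)) := by
      intro w hw i hi
      have hequ : ((univ.filter fun i => w ∈ B i ∧ φ w ∉ B i) ∪
          (univ.filter fun i => φ w ∈ B i ∧ w ∉ B i)) = univ.filter fun i => ψ i ≠ i :=
        Finset.eq_of_subset_of_card_le (hUAsub w hw) (by rw [hUA w hw, hNT18])
      have hmem2 : i ∈ ((univ.filter fun i => w ∈ B i ∧ φ w ∉ B i) ∪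
          (univ.filter fun i => φ w ∈ B i ∧ w ∉ B i)) := by
        rw [hequ]; simp [hi]
      simpa using hmem2
    have hNF18 : (univ.filter fun w => φ w ≠ w).card = 18 := by rw [hNFcard, hf18]
    obtain ⟨z, hzmem⟩ : ((univ.filter fun w => φ w ≠ w) \ {y, φ y}).Nonempty := by
      apply Finset.card_pos.1
      have h1 := Finset.card_le_card_sdiff_add_card (s := univ.filter fun w => φ w ≠ w)
        (t := {y, φ y})
      have h2 : ({y, φ y} : Finset (Fin 36)).card ≤ 2 :=
        (Finset.card_insert_le _ _).trans (by simp)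
      omega
    rw [Finset.mem_sdiff] at hzmem
    obtain ⟨hznf, hznot⟩ := hzmem
    simp only [mem_filter, mem_univ, true_and] at hznf
    simp only [Finset.mem_insert, Finset.mem_singleton, not_or] at hznot
    obtain ⟨hzy, hzφy⟩ := hznot
    have hz : φ z ≠ z := hznf
    have hdis : ∀ u v : Fin 36, (u = y ∨ u = φ y) → (v = z ∨ v = φ z) → u ≠ v := by
      rintro u v (rfl | rfl) (rfl | rfl) huv
      · exact hzy huv.symm
      · exact hzφy (by rw [huv, hφ2])
      · exact hzφy huv.symm
      · exact hzy (hφinj huv).symm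
    set NTs := univ.filter fun i => ψ i ≠ i with hNTs
    have hc11 := combo_count B φ ψ hp hfb hφ2 y z y z (Or.inl rfl) (Or.inl rfl)
      (hdis y z (Or.inl rfl) (Or.inl rfl))
    have hc12 := combo_count B φ ψ hp hfb hφ2 y z y (φ z) (Or.inl rfl) (Or.inr rfl)
      (hdis y (φ z) (Or.inl rfl) (Or.inr rfl))
    have hc21 := combo_count B φ ψ hp hfb hφ2 y z (φ y) z (Or.inr rfl) (Or.inl rfl)
      (hdis (φ y) z (Or.inr rfl) (Or.inl rfl))
    have hc22 := combo_count B φ ψ hp hfb hφ2 y z (φ y) (φ z) (Or.inr rfl) (Or.inr rfl)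
      (hdis (φ y) (φ z) (Or.inr rfl) (Or.inr rfl))
    have s1 := Finset.card_filter_add_card_filter_not
      (s := NTs) (p := fun i => y ∈ B i)
    have s2 := Finset.card_filter_add_card_filter_not
      (s := univ.filter fun i => ψ i ≠ i ∧ y ∈ B i) (p := fun i => z ∈ B i)
    have s3 := Finset.card_filter_add_card_filter_not
      (s := univ.filter fun i => ψ i ≠ i ∧ ¬ y ∈ B i) (p := fun i => z ∈ B i)
    rw [hNTs, Finset.filter_filter, Finset.filter_filter] at s1
    rw [Finset.filter_filter, Finset.filter_filter] at s2 s3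
    have e1 : (univ.filter fun i => (ψ i ≠ i) ∧ y ∈ B i)
        = univ.filter fun i => ψ i ≠ i ∧ y ∈ B i := rfl
    have e2 : (univ.filter fun i => (ψ i ≠ i) ∧ ¬ y ∈ B i)
        = univ.filter fun i => ψ i ≠ i ∧ ¬ y ∈ B i := rfl
    have e11 : (univ.filter fun i => (ψ i ≠ i ∧ y ∈ B i) ∧ z ∈ B i)
        = univ.filter fun i => ψ i ≠ i ∧ y ∈ B i ∧ z ∈ B i := by
      ext i; simp only [Finset.mem_filter, and_assoc]
    have e12 : (univ.filter fun i => (ψ i ≠ i ∧ y ∈ B i) ∧ ¬ z ∈ B i)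
        = univ.filter fun i => ψ i ≠ i ∧ y ∈ B i ∧ φ z ∈ B i := by
      ext i
      rw [Finset.mem_filter, Finset.mem_filter]
      constructor
      · rintro ⟨hu, ⟨hψi, hyi⟩, hnz⟩
        refine ⟨hu, hψi, hyi, ?_⟩
        rcases hUNT z hz i hψi with ⟨h1, _⟩ | ⟨h1, _⟩
        · exact absurd h1 hnz
        · exact h1
      · rintro ⟨hu, hψi, hyi, hφz⟩
        refine ⟨hu, ⟨hψi, hyi⟩, ?_⟩
        rcases hUNT z hz i hψi with ⟨_, h2⟩ | ⟨_, h2⟩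
        · exact absurd hφz h2
        · exact h2
    have e21 : (univ.filter fun i => (ψ i ≠ i ∧ ¬ y ∈ B i) ∧ z ∈ B i)
        = univ.filter fun i => ψ i ≠ i ∧ φ y ∈ B i ∧ z ∈ B i := by
      ext i
      rw [Finset.mem_filter, Finset.mem_filter]
      constructor
      · rintro ⟨hu, ⟨hψi, hny⟩, hzi⟩
        refine ⟨hu, hψi, ?_, hzi⟩
        rcases hUNT y hy i hψi with ⟨h1, _⟩ | ⟨h1, _⟩
        · exact absurd h1 hny
        · exact h1
      · rintro ⟨hu, hψi, hφy, hzi⟩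
        refine ⟨hu, ⟨hψi, ?_⟩, hzi⟩
        rcases hUNT y hy i hψi with ⟨_, h2⟩ | ⟨_, h2⟩
        · exact absurd hφy h2
        · exact h2
    have e22 : (univ.filter fun i => (ψ i ≠ i ∧ ¬ y ∈ B i) ∧ ¬ z ∈ B i)
        = univ.filter fun i => ψ i ≠ i ∧ φ y ∈ B i ∧ φ z ∈ B i := by
      ext i
      rw [Finset.mem_filter, Finset.mem_filter]
      constructor
      · rintro ⟨hu, ⟨hψi, hny⟩, hnz⟩
        refine ⟨hu, hψi, ?_, ?_⟩
        · rcases hUNT y hy i hψi with ⟨h1, _⟩ | ⟨h1, _⟩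
          · exact absurd h1 hny
          · exact h1
        · rcases hUNT z hz i hψi with ⟨h1, _⟩ | ⟨h1, _⟩
          · exact absurd h1 hnz
          · exact h1
      · rintro ⟨hu, hψi, hφy, hφz⟩
        refine ⟨hu, ⟨hψi, ?_⟩, ?_⟩
        · rcases hUNT y hy i hψi with ⟨_, h2⟩ | ⟨_, h2⟩
          · exact absurd hφy h2
          · exact h2
        · rcases hUNT z hz i hψi with ⟨_, h2⟩ | ⟨_, h2⟩
          · exact absurd hφz h2
          · exact h2
    rw [e11, e12] at s2
    rw [e21, e22] at s3
    rw [hNT18] at s1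
    omega
  -- f ≠ 14
  have hne14 : f ≠ 14 := by
    intro hf14
    have hNT22 : (univ.filter fun i => ψ i ≠ i).card = 22 := by rw [hNT, hf14]
    have hNF22 : (univ.filter fun x => φ x ≠ x).card = 22 := by rw [hNFcard, hf14]
    have hS4 : ∀ w : Fin 36, φ w ≠ w →
        (univ.filter fun i => ψ i ≠ i ∧ (w ∈ B i ↔ φ w ∈ B i)).card = 4 := by
      intro w hw
      have hsplit := Finset.card_filter_add_card_filter_not
        (s := univ.filter fun i => ψ i ≠ i) (p := fun i => (w ∈ B i ↔ φ w ∈ B i))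
      rw [Finset.filter_filter, Finset.filter_filter] at hsplit
      have hneg : (univ.filter fun i => (ψ i ≠ i) ∧ ¬(w ∈ B i ↔ φ w ∈ B i))
          = (univ.filter fun i => w ∈ B i ∧ φ w ∉ B i) ∪
            (univ.filter fun i => φ w ∈ B i ∧ w ∉ B i) := by
        ext i
        simp only [mem_union, mem_filter, mem_univ, true_and]
        constructor
        · rintro ⟨h1, h2⟩
          by_cases hwi : w ∈ B i
          · left; exact ⟨hwi, fun hc => h2 ⟨fun _ => hc, fun _ => hwi⟩⟩
          · right
            refine ⟨?_, hwi⟩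
            by_contra hc
            exact h2 ⟨fun h => absurd h hwi, fun h => absurd h hc⟩
        · rintro (⟨h1, h2⟩ | ⟨h1, h2⟩)
          · refine ⟨?_, fun hc => h2 (hc.1 h1)⟩
            intro heq
            exact h2 ((hfb i heq w).1 h1)
          · refine ⟨?_, fun hc => h2 (hc.2 h1)⟩
            intro heq
            exact h2 ((hfb i heq w).2 h1)
      rw [hneg, hUA w hw, hNT22] at hsplit
      omega
    apply no_fourteen_endgame φ ψ
      (fun w => univ.filter fun i => ψ i ≠ i ∧ (w ∈ B i ↔ φ w ∈ B i))
      (univ.filter fun i => ψ i ≠ i) hφ2 hψ2 hS4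
      (fun y z hy hz hzy hzφy => inter_card_two B φ ψ hp hfb hφ2 hψ2 hmem hφinj
        hNT22 hS4 y z hy hz hzy hzφy)
      ?_ ?_ ?_ ?_ hNT22 hNF22
    · intro w
      apply filter_ext
      intro i
      rw [hφ2 w]
      tauto
    · intro w i hi
      simp only [mem_filter, mem_univ, true_and] at hi ⊢
      obtain ⟨h1, h2⟩ := hi
      refine ⟨?_, ?_⟩
      · rw [hψ2]; exact Ne.symm h1
      · rw [hmem w i, hmem (φ w) i, hφ2]
        exact h2.symm
    · intro w i hi
      simp only [mem_filter, mem_univ, true_and] at hi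
      exact hi.1
    · intro w hw i hi
      simp only [mem_filter, mem_univ, true_and] at hi ⊢
      exact hi.1
  -- conclusion
  rcases hfeven with ⟨k, hk⟩
  simp only [Finset.mem_insert, Finset.mem_singleton]
  omega

theorem fixed_points_of_involution (B : Fin 36 → Finset (Fin 36)) (f : ℕ)
    (hB : IsDesign B) (hA : HasOrder2AutWithFixed B f) :
    f ∈ ({0, 4, 6, 8, 10, 12, 16} : Finset ℕ) := by
  obtain ⟨hbc, hp⟩ := hB
  obtain ⟨φ, ψ, hψB, hφ2, hφne, hf⟩ := hA
  exact main_core B f φ ψ hbc hp hψB (fun x => congrFun hφ2 x) hφne hf
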